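/- In the setting of polynomially weighted Blackwell approachability: let d_t denote the squared Euclidean distance of m̂_t = (1/T_t) Σ_{s=1}^t s^α m(x_s,y_s) to the closed convex set C, with T_t = Σ_{s=1}^t s^α. If ⟨m̂_t − c_t, m(x_{t+1},y_{t+1}) − c_t⟩ ≤ 0 where c_t is the projection of m̂_t onto C, and ‖m(x,y)‖₂ ≤ M for all x,y, then d_{t+1} ≤ d_t (1 − 2(t+1)^α / T_{t+1}) + ((t+1)^α / T_{t+1})² · 4M². -/

import Mathlib

open scoped BigOperators RealInnerProductSpace

theorem stmt11 {A B : Type*} [Fintype A] [Fintype B] {d : ℕ}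
    (m : (A → ℝ) → (B → ℝ) → EuclideanSpace ℝ (Fin d)) (M : ℝ)
    (hbound : ∀ x ∈ stdSimplex ℝ A, ∀ y ∈ stdSimplex ℝ B, ‖m x y‖ ≤ M)
    (C : Set (EuclideanSpace ℝ (Fin d))) (hCne : C.Nonempty) (hCcl : IsClosed C)
    (hCcv : Convex ℝ C)
    (α : ℝ) (hα : 0 ≤ α)
    (x : ℕ → A → ℝ) (y : ℕ → B → ℝ)
    (hx : ∀ s, x s ∈ stdSimplex ℝ A) (hy : ∀ s, y s ∈ stdSimplex ℝ B)
    (mhat : ℕ → EuclideanSpace ℝ (Fin d))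
    (hmhat : ∀ s, mhat s = (∑ u ∈ Finset.Icc 1 s, (u : ℝ) ^ α)⁻¹ •
      ∑ u ∈ Finset.Icc 1 s, (u : ℝ) ^ α • m (x u) (y u))
    (t : ℕ) (ht : 1 ≤ t)
    (c : EuclideanSpace ℝ (Fin d)) (hcmem : c ∈ C)
    (hcproj : Metric.infDist (mhat t) C = ‖mhat t - c‖)
    (hBlackwell : ⟪mhat t - c, m (x (t + 1)) (y (t + 1)) - c⟫ ≤ 0) :
    (Metric.infDist (mhat (t + 1)) C) ^ 2 ≤
      (Metric.infDist (mhat t) C) ^ 2 *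
          (1 - 2 * ((t + 1 : ℕ) : ℝ) ^ α / ∑ u ∈ Finset.Icc 1 (t + 1), (u : ℝ) ^ α) +
        (((t + 1 : ℕ) : ℝ) ^ α / ∑ u ∈ Finset.Icc 1 (t + 1), (u : ℝ) ^ α) ^ 2 *
          (4 * M ^ 2) := by
  classical
  set T1 : ℝ := ∑ u ∈ Finset.Icc 1 t, (u : ℝ) ^ α with hT1
  set a : ℝ := ((t + 1 : ℕ) : ℝ) ^ α with ha
  set v : EuclideanSpace ℝ (Fin d) := m (x (t + 1)) (y (t + 1)) with hv
  have hM : 0 ≤ M := le_trans (norm_nonneg _) (hbound _ (hx 1) _ (hy 1))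
  have hT1pos : 0 < T1 := by
    apply Finset.sum_pos
    · intro u hu
      have h1 : (1 : ℕ) ≤ u := (Finset.mem_Icc.mp hu).1
      exact Real.rpow_pos_of_pos (by exact_mod_cast h1) α
    · exact ⟨1, Finset.mem_Icc.mpr ⟨le_refl 1, ht⟩⟩
  have hapos : 0 < a := Real.rpow_pos_of_pos (by positivity) α
  have hT2eq : ∑ u ∈ Finset.Icc 1 (t + 1), (u : ℝ) ^ α = T1 + a :=
    Finset.sum_Icc_succ_top (by omega) _
  have hT2pos : 0 < T1 + a := by positivity
  set η : ℝ := a / (T1 + a) with hη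
  have hη0 : 0 < η := by positivity
  have hη1 : η ≤ 1 := by
    rw [hη, div_le_one hT2pos]; linarith
  -- norm of mhat t is at most M
  have hmtnorm : ‖mhat t‖ ≤ M := by
    rw [hmhat t, norm_smul, Real.norm_eq_abs, abs_of_nonneg (inv_nonneg.mpr hT1pos.le)]
    have hb : ‖∑ u ∈ Finset.Icc 1 t, (u : ℝ) ^ α • m (x u) (y u)‖ ≤ T1 * M := by
      calc ‖∑ u ∈ Finset.Icc 1 t, (u : ℝ) ^ α • m (x u) (y u)‖
          ≤ ∑ u ∈ Finset.Icc 1 t, ‖(u : ℝ) ^ α • m (x u) (y u)‖ := norm_sum_le _ _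
        _ ≤ ∑ u ∈ Finset.Icc 1 t, (u : ℝ) ^ α * M := by
            apply Finset.sum_le_sum
            intro u hu
            have h1 : (1 : ℕ) ≤ u := (Finset.mem_Icc.mp hu).1
            have hu0 : (0 : ℝ) < (u : ℝ) ^ α :=
              Real.rpow_pos_of_pos (by exact_mod_cast h1) α
            rw [norm_smul, Real.norm_eq_abs, abs_of_nonneg hu0.le]
            exact mul_le_mul_of_nonneg_left (hbound _ (hx u) _ (hy u)) hu0.le
        _ = T1 * M := by rw [← Finset.sum_mul]
    calc T1⁻¹ * ‖∑ u ∈ Finset.Icc 1 t, (u : ℝ) ^ α • m (x u) (y u)‖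
        ≤ T1⁻¹ * (T1 * M) := by
          exact mul_le_mul_of_nonneg_left hb (inv_nonneg.mpr hT1pos.le)
      _ = M := by field_simp
  -- recurrence
  have hS1 : ∑ u ∈ Finset.Icc 1 t, (u : ℝ) ^ α • m (x u) (y u) = T1 • mhat t := by
    rw [hmhat t, smul_smul, mul_inv_cancel₀ hT1pos.ne', one_smul]
  have hrec : mhat (t + 1) = mhat t + η • (v - mhat t) := by
    rw [hmhat (t + 1), hT2eq, Finset.sum_Icc_succ_top (show 1 ≤ t + 1 by omega), hS1, hη]
    match_scalars <;> (field_simp; try push_cast; try ring_nf; try norm_cast)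
    all_goals rw [ha, Nat.add_comm]
  -- main bound
  have hkey : Metric.infDist (mhat (t + 1)) C ≤ ‖mhat (t + 1) - c‖ := by
    rw [← dist_eq_norm]
    exact Metric.infDist_le_dist_of_mem hcmem
  have h1 : (Metric.infDist (mhat (t + 1)) C) ^ 2 ≤ ‖mhat (t + 1) - c‖ ^ 2 :=
    pow_le_pow_left₀ Metric.infDist_nonneg hkey 2
  have hsplit : mhat (t + 1) - c = (mhat t - c) + η • (v - mhat t) := by
    rw [hrec]; abel
  have hexp : ‖mhat (t + 1) - c‖ ^ 2
      = ‖mhat t - c‖ ^ 2 + 2 * (η * ⟪mhat t - c, v - mhat t⟫) + η ^ 2 * ‖v - mhat t‖ ^ 2 := by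
    rw [hsplit, @norm_add_sq_real, real_inner_smul_right, norm_smul, Real.norm_eq_abs,
      abs_of_nonneg hη0.le, mul_pow]
  have hinner : ⟪mhat t - c, v - mhat t⟫ ≤ -‖mhat t - c‖ ^ 2 := by
    have : v - mhat t = (v - c) - (mhat t - c) := by abel
    rw [this, inner_sub_right, real_inner_self_eq_norm_sq]
    linarith [hBlackwell]
  have hvnorm : ‖v - mhat t‖ ^ 2 ≤ 4 * M ^ 2 := by
    have h2 : ‖v - mhat t‖ ≤ 2 * M := by
      calc ‖v - mhat t‖ ≤ ‖v‖ + ‖mhat t‖ := norm_sub_le _ _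
        _ ≤ M + M := add_le_add (hbound _ (hx (t + 1)) _ (hy (t + 1))) hmtnorm
        _ = 2 * M := by ring
    nlinarith [norm_nonneg (v - mhat t)]
  rw [hcproj, hT2eq]
  have hfinal : ‖mhat (t + 1) - c‖ ^ 2
      ≤ ‖mhat t - c‖ ^ 2 * (1 - 2 * η) + η ^ 2 * (4 * M ^ 2) := by
    rw [hexp]
    have hc1 : 2 * (η * ⟪mhat t - c, v - mhat t⟫) ≤ 2 * (η * (-‖mhat t - c‖ ^ 2)) := by
      apply mul_le_mul_of_nonneg_left _ (by norm_num)
      exact mul_le_mul_of_nonneg_left hinner hη0.le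
    have hc2 : η ^ 2 * ‖v - mhat t‖ ^ 2 ≤ η ^ 2 * (4 * M ^ 2) :=
      mul_le_mul_of_nonneg_left hvnorm (by positivity)
    calc ‖mhat t - c‖ ^ 2 + 2 * (η * ⟪mhat t - c, v - mhat t⟫) + η ^ 2 * ‖v - mhat t‖ ^ 2
        ≤ ‖mhat t - c‖ ^ 2 + 2 * (η * (-‖mhat t - c‖ ^ 2)) + η ^ 2 * (4 * M ^ 2) := by
          linarith
      _ = ‖mhat t - c‖ ^ 2 * (1 - 2 * η) + η ^ 2 * (4 * M ^ 2) := by ring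
  calc (Metric.infDist (mhat (t + 1)) C) ^ 2 ≤ ‖mhat (t + 1) - c‖ ^ 2 := h1
    _ ≤ ‖mhat t - c‖ ^ 2 * (1 - 2 * η) + η ^ 2 * (4 * M ^ 2) := hfinal
    _ = ‖mhat t - c‖ ^ 2 * (1 - 2 * a / (T1 + a)) + (a / (T1 + a)) ^ 2 * (4 * M ^ 2) := by
        rw [hη]; ring
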